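/- arXiv:0910.4800 — 2 statements merged into one kernel-verified Lean document; each statement's English description precedes it below -/
import Mathlib

section
/- Let 𝒜 = {a,b,c,d} and let ω^G be the Grigorchuk substitution sequence. Then the set of σ-preimages of ω^G inside Z(ω^G,σ) is exactly {b·ω^G, c·ω^G, d·ω^G}, where for a letter l the sequence l·x is defined by (l·x)(1) = l and (l·x)(n+1) = x(n). Moreover, ω^G is the unique element of Z(ω^G,σ) having more than one σ-preimage in Z(ω^G,σ). -/
/-- The four-letter alphabet 𝒜 = {a,b,c,d}. -/
inductive A : Type
  | a | b | c | d
  deriving DecidableEq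

instance : TopologicalSpace A := ⊥
instance : DiscreteTopology A := ⟨rfl⟩

/-- The one-sided shift on sequences.  Sequences are 0-indexed here: index `n`
stands for position `n+1` of the paper's sequences `{1,2,3,…} → 𝒜`. -/
def shift {𝒜 : Type*} (x : ℕ → 𝒜) : ℕ → 𝒜 := fun n => x (n + 1)

/-- `Z(ω,σ)`: the closure of the forward shift-orbit of `ω`. -/
def orbitClosure {𝒜 : Type*} [TopologicalSpace 𝒜] (ω : ℕ → 𝒜) : Set (ℕ → 𝒜) :=
  closure {y | ∃ n : ℕ, shift^[n] ω = y}

/-- `l·x`: prepend the letter `l` to the sequence `x`. -/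
def consSeq {𝒜 : Type*} (l : 𝒜) (x : ℕ → 𝒜) : ℕ → 𝒜
  | 0 => l
  | n + 1 => x n

/-- The Grigorchuk substitution sequence `ω^G` (0-indexed: `omegaG n` is the letter at
position `m = n+1`).  Writing `m = 2^k(2l+1)`: the letter is `a` if `k = 0`, and for
`k ≥ 1` it is `d`, `c`, or `b` according as `k ≡ 0, 1, 2 (mod 3)`. -/
def omegaG : ℕ → A := fun n =>
  if padicValNat 2 (n + 1) = 0 then A.a
  else if padicValNat 2 (n + 1) % 3 = 0 then A.d
  else if padicValNat 2 (n + 1) % 3 = 1 then A.c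
  else A.b

namespace Grig

instance : Fact (Nat.Prime 2) := ⟨Nat.prime_two⟩

/-- 1-indexed version of `omegaG`. -/
def Om : ℕ → A := fun m =>
  if padicValNat 2 m = 0 then A.a
  else if padicValNat 2 m % 3 = 0 then A.d
  else if padicValNat 2 m % 3 = 1 then A.c
  else A.b

lemma omegaG_eq (n : ℕ) : omegaG n = Om (n + 1) := rfl

def rho : A → A
  | A.a => A.c
  | A.b => A.d
  | A.c => A.b
  | A.d => A.c

lemma Om_odd {m : ℕ} (h : m % 2 = 1) : Om m = A.a := by
  have hv : padicValNat 2 m = 0 := padicValNat.eq_zero_of_not_dvd (by omega)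
  simp [Om, hv]

lemma Om_even_ne_a {m : ℕ} (h : m % 2 = 0) (h0 : m ≠ 0) : Om m ≠ A.a := by
  have hv : 1 ≤ padicValNat 2 m :=
    one_le_padicValNat_of_dvd (by omega) (by omega)
  unfold Om
  split_ifs with h1 h2 h3 <;> simp_all <;> omega

lemma Om_two_mul {m : ℕ} (h0 : m ≠ 0) : Om (2 * m) = rho (Om m) := by
  have hv : padicValNat 2 (2 * m) = padicValNat 2 m + 1 := by
    rw [padicValNat.mul (by norm_num) h0, padicValNat.self (by norm_num)]
    omega
  unfold Om rho
  rw [hv]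
  rcases Nat.eq_zero_or_pos (padicValNat 2 m) with h | h
  · simp [h]
  · have h3 : padicValNat 2 m % 3 = 0 ∨ padicValNat 2 m % 3 = 1 ∨
        padicValNat 2 m % 3 = 2 := by omega
    rcases h3 with h3 | h3 | h3 <;>
      simp only [h3] <;> split_ifs <;> simp_all <;> omega

lemma Om_d_dvd8 {m : ℕ} (h : Om m = A.d) : 8 ∣ m := by
  unfold Om at h
  split_ifs at h with h1 h2 h3
  have h4 : 3 ≤ padicValNat 2 m := by omega
  have h5 : (2:ℕ) ^ 3 ∣ 2 ^ padicValNat 2 m := pow_dvd_pow 2 h4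
  have h6 : (2:ℕ) ^ 3 ∣ m := dvd_trans h5 pow_padicValNat_dvd
  norm_num at h6
  exact h6

lemma rho_inj_ne_a {x y : A} (hx : x ≠ A.a) (hy : y ≠ A.a) (h : rho x = rho y) :
    x = y := by
  cases x <;> cases y <;> simp_all [rho]

lemma rho_eq_c {x : A} (h : rho x = A.c) : x = A.a ∨ x = A.d := by
  cases x <;> simp_all [rho]

lemma val_add {j t m : ℕ} (hm : 2 ^ j ∣ m) (ht0 : 0 < t) (htj : t < 2 ^ j) :
    padicValNat 2 (m + t) = padicValNat 2 t := by
  set v := padicValNat 2 t with hv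
  have hvd : 2 ^ v ∣ t := pow_padicValNat_dvd
  have hvj : v < j := by
    by_contra hc
    have h1 : 2 ^ j ≤ 2 ^ v := Nat.pow_le_pow_right (by norm_num) (by omega)
    have h2 := Nat.le_of_dvd ht0 hvd
    omega
  have hnd : ¬ 2 ^ (v + 1) ∣ t := by
    intro hc
    rcases (padicValNat_dvd_iff (v + 1) t).mp hc with h | h <;> omega
  have hdm : 2 ^ (v + 1) ∣ m := dvd_trans (pow_dvd_pow 2 (by omega)) hm
  have h1 : 2 ^ v ∣ m + t :=
    Dvd.dvd.add (dvd_trans (pow_dvd_pow 2 (by omega)) hm) hvd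
  have h2 : ¬ 2 ^ (v + 1) ∣ m + t := by
    intro hc
    have := Nat.dvd_sub hc hdm
    simp only [Nat.add_sub_cancel_left] at this
    exact hnd this
  have h3 := (padicValNat_dvd_iff v (m + t)).mp h1
  have h4 : ¬ (m + t = 0 ∨ v + 1 ≤ padicValNat 2 (m + t)) := by
    intro hc
    exact h2 ((padicValNat_dvd_iff (v + 1) (m + t)).mpr hc)
  omega

lemma Om_pow_add {j t : ℕ} (ht0 : 0 < t) (htj : t < 2 ^ j) :
    Om (2 ^ j + t) = Om t := by
  have := val_add (dvd_refl (2 ^ j)) ht0 htj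
  simp only [Om, this]

/-- both occurrences of a left-special word start at odd positions. -/
lemma odd_odd {p q : ℕ} (hp : 2 ≤ p) (hq : 2 ≤ q)
    (hne : Om (p - 1) ≠ Om (q - 1)) (h0 : Om p = Om q) :
    p % 2 = 1 ∧ q % 2 = 1 := by
  rcases Nat.mod_two_eq_zero_or_one p with h1 | h1 <;>
    rcases Nat.mod_two_eq_zero_or_one q with h2 | h2
  · exact absurd (by rw [Om_odd (show (p-1) % 2 = 1 by omega),
      Om_odd (show (q-1) % 2 = 1 by omega)]) hne
  · exact absurd (h0.trans (Om_odd h2)) (Om_even_ne_a h1 (by omega))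
  · exact absurd (h0.symm.trans (Om_odd h1)) (Om_even_ne_a h2 (by omega))
  · exact ⟨h1, h2⟩

/-- Key combinatorial lemma: a left-special factor of `ω^G` of length `2^(k+2)`
agrees with the prefix of `ω^G` on its first `2^k` letters. -/
lemma main : ∀ k p q : ℕ, 2 ≤ p → 2 ≤ q → Om (p - 1) ≠ Om (q - 1) →
    (∀ i < 2 ^ (k + 2), Om (p + i) = Om (q + i)) →
    ∀ i < 2 ^ k, Om (p + i) = Om (i + 1) := by
  intro k
  induction k with
  | zero =>
    intro p q hp hq hne hw i hi
    interval_cases i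
    have h := odd_odd hp hq hne (by simpa using hw 0 (by norm_num))
    rw [Nat.add_zero, Om_odd h.1, Om_odd (show 1 % 2 = 1 by norm_num)]
  | succ k ih =>
    intro p q hp hq hne hw i hi
    have hpow : (4:ℕ) ≤ 2 ^ (k + 2) := by
      calc (4:ℕ) = 2 ^ 2 := by norm_num
      _ ≤ 2 ^ (k + 2) := Nat.pow_le_pow_right (by norm_num) (by omega)
    have hpow3 : 2 ^ (k + 1 + 2) = 2 * 2 ^ (k + 2) := by ring
    obtain ⟨hpo, hqo⟩ := odd_odd hp hq hne
      (by simpa using hw 0 (by positivity))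
    obtain ⟨P, hP⟩ : ∃ P, p = 2 * P + 1 := ⟨p / 2, by omega⟩
    obtain ⟨Q, hQ⟩ : ∃ Q, q = 2 * Q + 1 := ⟨q / 2, by omega⟩
    have hP1 : 1 ≤ P := by omega
    have hQ1 : 1 ≤ Q := by omega
    -- matching of rho-images
    have key : ∀ j, 1 ≤ j → j ≤ 2 ^ (k + 2) → rho (Om (P + j)) = rho (Om (Q + j)) := by
      intro j h1 h2
      have hlt : 2 * j - 1 < 2 ^ (k + 1 + 2) := by omega
      have := hw (2 * j - 1) hlt
      rw [show p + (2 * j - 1) = 2 * (P + j) by omega,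
          show q + (2 * j - 1) = 2 * (Q + j) by omega,
          Om_two_mul (by omega), Om_two_mul (by omega)] at this
      exact this
    -- distinct preceding letters at the doubled level
    have hPQ : Om P ≠ Om Q := by
      intro h
      apply hne
      rw [show p - 1 = 2 * P by omega, show q - 1 = 2 * Q by omega,
        Om_two_mul (by omega), Om_two_mul (by omega), h]
    -- same parity of P and Q
    have hpar : P % 2 = Q % 2 := by
      by_contra hc
      have hd : ∀ j', 1 ≤ j' → j' ≤ 4 → (P + j') % 2 = 0 → 8 ∣ P + j' := by
        intro j' h1 h2 h3
        have hQodd : (Q + j') % 2 = 1 := by omega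
        have hk := key j' h1 (by omega)
        rw [Om_odd hQodd] at hk
        rcases rho_eq_c hk with h | h
        · exact absurd h (Om_even_ne_a h3 (by omega))
        · exact Om_d_dvd8 h
      obtain ⟨j0, hj0a, hj0b, hj0c⟩ :
          ∃ j0, 1 ≤ j0 ∧ j0 ≤ 2 ∧ (P + j0) % 2 = 0 := by
        rcases Nat.mod_two_eq_zero_or_one P with h | h
        · exact ⟨2, by omega⟩
        · exact ⟨1, by omega⟩
      have d1 := hd j0 hj0a (by omega) hj0c
      have d2 := hd (j0 + 2) (by omega) (by omega) (by omega)
      omega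
    -- matching of the derived words
    have key2 : ∀ i' < 2 ^ (k + 2), Om (P + 1 + i') = Om (Q + 1 + i') := by
      intro i' hi'
      have hk := key (i' + 1) (by omega) (by omega)
      rw [show P + (i' + 1) = P + 1 + i' by ring,
          show Q + (i' + 1) = Q + 1 + i' by ring] at hk
      rcases Nat.mod_two_eq_zero_or_one (P + 1 + i') with h | h
      · exact rho_inj_ne_a (Om_even_ne_a h (by omega))
          (Om_even_ne_a (by omega) (by omega)) hk
      · rw [Om_odd h, Om_odd (show (Q + 1 + i') % 2 = 1 by omega)]
    have hin := ih (P + 1) (Q + 1) (by omega) (by omega)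
      (by simpa using hPQ) key2
    -- conclude
    rcases Nat.mod_two_eq_zero_or_one i with h | h
    · rw [Om_odd (show (p + i) % 2 = 1 by omega),
        Om_odd (show (i + 1) % 2 = 1 by omega)]
    · obtain ⟨j, hj⟩ : ∃ j, i = 2 * j - 1 ∧ 1 ≤ j := ⟨(i + 1) / 2, by omega⟩
      obtain ⟨hj1, hj2⟩ := hj
      have hjk : j ≤ 2 ^ k := by
        have : 2 ^ (k + 1) = 2 * 2 ^ k := by ring
        omega
      have h1 := hin (j - 1) (by omega)
      rw [show P + 1 + (j - 1) = P + j by omega,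
          show j - 1 + 1 = j by omega] at h1
      rw [show p + i = 2 * (P + j) by omega,
          show i + 1 = 2 * j by omega,
          Om_two_mul (by omega), Om_two_mul (by omega), h1]

lemma shift_iterate (x : ℕ → A) (n i : ℕ) : (shift^[n] x) i = x (n + i) := by
  induction n generalizing x with
  | zero => simp
  | succ n ih =>
    rw [Function.iterate_succ_apply, ih]
    show x (n + i + 1) = x (n + 1 + i)
    congr 1
    omega

lemma mem_iff (y : ℕ → A) :
    y ∈ orbitClosure omegaG ↔ ∀ N, ∃ n, ∀ i < N, omegaG (n + i) = y i := by
  constructor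
  · intro hy N
    have hopen : IsOpen {z : ℕ → A | ∀ i : Fin N, z i.1 = y i.1} := by
      have : {z : ℕ → A | ∀ i : Fin N, z i.1 = y i.1} =
          ⋂ i : Fin N, {z : ℕ → A | z i.1 = y i.1} := by
        ext z; simp
      rw [this]
      refine isOpen_iInter_of_finite fun i => ?_
      have h2 : {z : ℕ → A | z i.1 = y i.1} =
          (fun z : ℕ → A => z i.1) ⁻¹' {y i.1} := rfl
      rw [h2]
      exact IsOpen.preimage (continuous_apply i.1) (isOpen_discrete _)
    rcases mem_closure_iff.mp hy _ hopen (fun i => rfl) with ⟨z, hz1, n, hz2⟩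
    refine ⟨n, fun i hi => ?_⟩
    have := hz1 ⟨i, hi⟩
    rw [← hz2] at this
    rw [← this, shift_iterate]
  · intro h
    choose n hn using h
    apply mem_closure_of_tendsto (f := fun N => shift^[n N] omegaG)
      (b := Filter.atTop)
    · rw [tendsto_pi_nhds]
      intro i
      rw [nhds_discrete, Filter.tendsto_pure]
      filter_upwards [Filter.eventually_ge_atTop (i + 1)] with N hN
      rw [shift_iterate]
      exact hn N i (by omega)
    · exact Filter.Eventually.of_forall fun N => ⟨n N, rfl⟩

lemma shift_cons (l : A) (x : ℕ → A) : shift (consSeq l x) = x := rfl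

lemma eq_cons {y w : ℕ → A} (h : shift y = w) : y = consSeq (y 0) w := by
  funext n
  cases n with
  | zero => rfl
  | succ n => exact congrFun h n

lemma cons_mem (l : A) (hl : l ≠ A.a) : consSeq l omegaG ∈ orbitClosure omegaG := by
  rw [mem_iff]
  intro N
  obtain ⟨r, hr3, hrl⟩ :
      ∃ r, r < 3 ∧ (if r = 0 then A.d else if r = 1 then A.c else A.b) = l := by
    cases l
    · exact absurd rfl hl
    · exact ⟨2, by norm_num⟩
    · exact ⟨1, by norm_num⟩
    · exact ⟨0, by norm_num⟩
  set j := 3 * (N + 1) + r with hj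
  have hjN : N < 2 ^ j := lt_of_lt_of_le (Nat.lt_two_pow_self (n := N))
    (Nat.pow_le_pow_right (by norm_num) (by omega))
  have h2j : 1 ≤ 2 ^ j := Nat.one_le_two_pow
  refine ⟨2 ^ j - 1, fun i hi => ?_⟩
  rw [omegaG_eq, show 2 ^ j - 1 + i + 1 = 2 ^ j + i by omega]
  cases i with
  | zero =>
    show Om (2 ^ j + 0) = l
    have hv : padicValNat 2 (2 ^ j) = j := padicValNat.prime_pow j
    have hjm : j % 3 = r := by omega
    rw [Nat.add_zero, ← hrl]
    simp only [Om, hv, hjm]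
    have hj0 : j ≠ 0 := by omega
    rcases (show r = 0 ∨ r = 1 ∨ r = 2 by omega) with h | h | h <;>
      subst h <;> split_ifs <;> simp_all <;> omega
  | succ i' =>
    show Om (2 ^ j + (i' + 1)) = consSeq l omegaG (i' + 1)
    rw [Om_pow_add (by omega) (by omega)]
    rfl

lemma leftspecial {w : ℕ → A} {l₁ l₂ : A} (hl : l₁ ≠ l₂)
    (h₁ : consSeq l₁ w ∈ orbitClosure omegaG)
    (h₂ : consSeq l₂ w ∈ orbitClosure omegaG) :
    w = omegaG := by
  funext i
  obtain ⟨n₁, hn₁⟩ := (mem_iff _).mp h₁ (2 ^ (i + 2) + 1)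
  obtain ⟨n₂, hn₂⟩ := (mem_iff _).mp h₂ (2 ^ (i + 2) + 1)
  set p := n₁ + 2 with hp
  set q := n₂ + 2 with hq
  have hp1 : Om (p - 1) = l₁ := by
    have := hn₁ 0 (by positivity)
    rw [omegaG_eq] at this
    exact this
  have hq1 : Om (q - 1) = l₂ := by
    have := hn₂ 0 (by positivity)
    rw [omegaG_eq] at this
    exact this
  have hpw : ∀ i' < 2 ^ (i + 2), Om (p + i') = w i' := by
    intro i' hi'
    have := hn₁ (i' + 1) (by omega)
    rw [omegaG_eq, show n₁ + (i' + 1) + 1 = p + i' by omega] at this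
    exact this
  have hqw : ∀ i' < 2 ^ (i + 2), Om (q + i') = w i' := by
    intro i' hi'
    have := hn₂ (i' + 1) (by omega)
    rw [omegaG_eq, show n₂ + (i' + 1) + 1 = q + i' by omega] at this
    exact this
  have hi2 : i < 2 ^ (i + 2) := lt_of_lt_of_le (Nat.lt_two_pow_self (n := i))
    (Nat.pow_le_pow_right (by norm_num) (by omega))
  have hmain := main i p q (by omega) (by omega)
    (by rw [hp1, hq1]; exact hl)
    (fun i' hi' => by rw [hpw i' hi', hqw i' hi'])
  have := hmain i (Nat.lt_two_pow_self (n := i))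
  rw [hpw i hi2] at this
  rw [this, omegaG_eq]

end Grig

/-- The shift-preimages of `ω^G` inside `Z(ω^G,σ)` are exactly `b·ω^G, c·ω^G, d·ω^G`;
moreover `ω^G` is the unique element of `Z(ω^G,σ)` with more than one shift-preimage
in `Z(ω^G,σ)`. -/
theorem stmt7 :
    {y | y ∈ orbitClosure omegaG ∧ shift y = omegaG} =
      {consSeq A.b omegaG, consSeq A.c omegaG, consSeq A.d omegaG} ∧
    (∃ η₁ ∈ orbitClosure omegaG, ∃ η₂ ∈ orbitClosure omegaG,
      η₁ ≠ η₂ ∧ shift η₁ = omegaG ∧ shift η₂ = omegaG) ∧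
    ∀ w ∈ orbitClosure omegaG,
      (∃ η₁ ∈ orbitClosure omegaG, ∃ η₂ ∈ orbitClosure omegaG,
        η₁ ≠ η₂ ∧ shift η₁ = w ∧ shift η₂ = w) → w = omegaG := by
  refine ⟨?_, ?_, ?_⟩
  · ext y
    simp only [Set.mem_setOf_eq, Set.mem_insert_iff, Set.mem_singleton_iff]
    constructor
    · rintro ⟨hy, hs⟩
      have hy0 : y = consSeq (y 0) omegaG := Grig.eq_cons hs
      have hne : y 0 ≠ A.a := by
        obtain ⟨n, hn⟩ := (Grig.mem_iff y).mp hy 2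
        have h0 := hn 0 (by norm_num)
        have h1 := hn 1 (by norm_num)
        rw [Grig.omegaG_eq] at h0 h1
        have hy1 : y 1 = A.a := by
          have := congrFun hs 0
          rw [show shift y 0 = y 1 from rfl] at this
          rw [this, Grig.omegaG_eq]
          exact Grig.Om_odd (by norm_num)
        rw [hy1] at h1
        have hodd : (n + 1 + 1) % 2 = 1 := by
          by_contra hc
          exact Grig.Om_even_ne_a (by omega) (by omega) h1
        rw [← h0]
        exact Grig.Om_even_ne_a (by omega) (by omega)
      rcases h : y 0 with _ | _ | _ | _
      · exact absurd h hne
      · left; rw [hy0, h]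
      · right; left; rw [hy0, h]
      · right; right; rw [hy0, h]
    · rintro (h | h | h) <;> subst h <;>
        exact ⟨Grig.cons_mem _ (by intro hc; cases hc), Grig.shift_cons _ _⟩
  · refine ⟨consSeq A.b omegaG, Grig.cons_mem _ (by intro hc; cases hc),
      consSeq A.c omegaG, Grig.cons_mem _ (by intro hc; cases hc), ?_, rfl, rfl⟩
    intro h
    exact absurd (congrFun h 0) (by intro hc; cases hc)
  · rintro w _ ⟨η₁, hη₁, η₂, hη₂, hne, hs₁, hs₂⟩
    have e₁ : η₁ = consSeq (η₁ 0) w := Grig.eq_cons hs₁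
    have e₂ : η₂ = consSeq (η₂ 0) w := Grig.eq_cons hs₂
    have hl : η₁ 0 ≠ η₂ 0 := by
      intro h
      apply hne
      rw [e₁, e₂, h]
    rw [e₁] at hη₁
    rw [e₂] at hη₂
    exact Grig.leftspecial hl hη₁ hη₂
end

section
/- Let 𝒜 be a nonempty finite alphabet and let ω be a Toeplitz sequence over 𝒜. Then for every integer p ≥ 1 there exists an integer K ≥ 1 with the following property: for every x ∈ Z(ω,σ) and every n ≥ 1, if x(n+kp) = x(n) for all 1 ≤ k ≤ K, then x(n+kp) = x(n) for all k ≥ 1. -/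
/-- A sequence is Toeplitz if every position is periodically repeated. -/
def IsToeplitz {𝒜 : Type*} (x : ℕ → 𝒜) : Prop :=
  ∀ n : ℕ, ∃ p : ℕ, 0 < p ∧ ∀ k : ℕ, 0 < k → x (n + k * p) = x n

lemma shift_iterate_apply {𝒜 : Type*} : ∀ (m : ℕ) (x : ℕ → 𝒜) (j : ℕ),
    (shift^[m] x) j = x (j + m) := by
  intro m
  induction m with
  | zero => intro x j; rfl
  | succ m ih =>
      intro x j
      rw [Function.iterate_succ_apply, ih]
      rfl

/-- A Toeplitz sequence has uniformly bounded constant runs propagation: there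
is `B` such that a constant run of length `B` starting at `a` forces the value
to repeat forever. -/
lemma runBound {𝒜 : Type*} (d : ℕ → 𝒜) (hTd : IsToeplitz d) :
    ∃ B : ℕ, ∀ a : ℕ, (∀ k : ℕ, k ≤ B → d (a + k) = d a) → ∀ k : ℕ, d (a + k) = d a := by
  by_cases hc : ∀ i j, d i = d j
  · exact ⟨1, fun a _ k => hc _ _⟩
  · push_neg at hc
    obtain ⟨i, j, hij⟩ := hc
    obtain ⟨qi, hqi, hi⟩ := hTd i
    obtain ⟨qj, hqj, hj⟩ := hTd j
    set q := qi * qj with hq_def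
    have hq : 0 < q := Nat.mul_pos hqi hqj
    refine ⟨i + j + 2 * q, fun a h => ?_⟩
    exfalso
    apply hij
    set s := a / q with hs_def
    have h1 : q * s + a % q = a := Nat.div_add_mod a q
    have h2 : a % q < q := Nat.mod_lt a hq
    have e : (s + 1) * q = q * s + q := by ring
    have hqs : q * s ≤ a := Nat.le.intro h1
    set u := i + (s + 1) * q with hu_def
    set v := j + (s + 1) * q with hv_def
    have hu1 : a ≤ u := by rw [hu_def, e]; linarith
    have hu2 : u ≤ a + (i + j + 2 * q) := by rw [hu_def, e]; linarith
    have hv1 : a ≤ v := by rw [hv_def, e]; linarith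
    have hv2 : v ≤ a + (i + j + 2 * q) := by rw [hv_def, e]; linarith
    have hdu : d u = d i := by
      have e2 : u = i + ((s + 1) * qj) * qi := by rw [hu_def, hq_def]; ring
      rw [e2]
      exact hi ((s + 1) * qj) (Nat.mul_pos (Nat.succ_pos s) hqj)
    have hdv : d v = d j := by
      have e2 : v = j + ((s + 1) * qi) * qj := by rw [hv_def, hq_def]; ring
      rw [e2]
      exact hj ((s + 1) * qi) (Nat.mul_pos (Nat.succ_pos s) hqi)
    have hau : a + (u - a) = u := by omega
    have hav : a + (v - a) = v := by omega
    have h3 : d u = d a := by rw [← hau]; exact h (u - a) (by omega)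
    have h4 : d v = d a := by rw [← hav]; exact h (v - a) (by omega)
    rw [← hdu, ← hdv, h3, h4]

/-- For a Toeplitz sequence `ω` and any `p ≥ 1` there is a `K ≥ 1` such that for
every `x ∈ Z(ω,σ)` and every position `n`: if `x(n+kp) = x(n)` for `1 ≤ k ≤ K`,
then `x(n+kp) = x(n)` for all `k ≥ 1`. -/
theorem stmt11 {𝒜 : Type*} [Fintype 𝒜] [Nonempty 𝒜] [TopologicalSpace 𝒜] [DiscreteTopology 𝒜]
    (ω : ℕ → 𝒜) (hT : IsToeplitz ω) (p : ℕ) (hp : 0 < p) :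
    ∃ K : ℕ, 0 < K ∧ ∀ x ∈ orbitClosure ω, ∀ n : ℕ,
      (∀ k : ℕ, 1 ≤ k → k ≤ K → x (n + k * p) = x n) →
      ∀ k : ℕ, 0 < k → x (n + k * p) = x n := by
  classical
  -- the "columns" of ω along step p are Toeplitz
  have hDT : ∀ r : ℕ, IsToeplitz (fun k => ω (r + k * p)) := by
    intro r n
    obtain ⟨q, hq, hper⟩ := hT (r + n * p)
    refine ⟨q, hq, fun k hk => ?_⟩
    show ω (r + (n + k * q) * p) = ω (r + n * p)
    have h1 : r + (n + k * q) * p = (r + n * p) + (k * p) * q := by ring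
    rw [h1]
    exact hper (k * p) (Nat.mul_pos hk hp)
  choose B hB using fun r => runBound (fun k => ω (r + k * p)) (hDT r)
  refine ⟨(Finset.range p).sup B + 1, Nat.succ_pos _, ?_⟩
  set K := (Finset.range p).sup B + 1 with hKdef
  intro x hx n h k0 hk0
  set M := n + (k0 + K) * p with hMdef
  have hUopen : IsOpen {y : ℕ → 𝒜 | ∀ j ≤ M, y j = x j} := by
    have he : {y : ℕ → 𝒜 | ∀ j ≤ M, y j = x j}
        = ⋂ j ∈ Finset.range (M + 1), {y : ℕ → 𝒜 | y j = x j} := by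
      ext y
      simp [Nat.lt_succ_iff]
    rw [he]
    refine isOpen_biInter_finset fun j _ => ?_
    have hpre : {y : ℕ → 𝒜 | y j = x j} = (fun y : ℕ → 𝒜 => y j) ⁻¹' {x j} := rfl
    rw [hpre]
    exact (continuous_apply j).isOpen_preimage _ (isOpen_discrete _)
  have hxU : x ∈ {y : ℕ → 𝒜 | ∀ j ≤ M, y j = x j} := fun j _ => rfl
  rw [orbitClosure] at hx
  obtain ⟨y, hyU, m, hym⟩ := mem_closure_iff.mp hx _ hUopen hxU
  have hagree : ∀ j, j ≤ M → ω (j + m) = x j := by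
    intro j hj
    have := hyU j hj
    rw [← hym, shift_iterate_apply] at this
    exact this
  set r := (n + m) % p with hr_def
  set a := (n + m) / p with ha_def
  have hr : r < p := Nat.mod_lt _ hp
  have hdiv : p * a + r = n + m := Nat.div_add_mod _ _
  have hcol : ∀ k : ℕ, ω (n + k * p + m) = ω (r + (a + k) * p) := by
    intro k
    congr 1
    have h5 : (a + k) * p = p * a + k * p := by ring
    rw [h5]
    linarith
  have hBK : B r + 1 ≤ K := by
    have := Finset.le_sup (f := B) (Finset.mem_range.mpr hr)
    omega
  have hnM : n ≤ M := by
    rw [hMdef]; exact Nat.le_add_right _ _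
  have hkM : ∀ k : ℕ, k ≤ k0 + K → n + k * p ≤ M := by
    intro k hk
    rw [hMdef]
    exact Nat.add_le_add_left (Nat.mul_le_mul_right p hk) n
  have hxn : x n = ω (r + a * p) := by
    have e0 : ω (n + 0 * p + m) = ω (r + (a + 0) * p) := hcol 0
    simp only [Nat.zero_mul, Nat.add_zero] at e0
    rw [← hagree n hnM, e0]
  have hbase : ∀ k : ℕ, k ≤ B r → ω (r + (a + k) * p) = ω (r + a * p) := by
    intro k hk
    rcases Nat.eq_zero_or_pos k with h0 | hkpos
    · subst h0; simp
    · have hkK : k ≤ k0 + K := by omega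
      have e1 : ω (r + (a + k) * p) = x (n + k * p) := by
        rw [← hcol k]
        exact hagree _ (hkM k hkK)
      have e2 : x (n + k * p) = x n := h k hkpos (by omega)
      rw [e1, e2, hxn]
  have hall : ω (r + (a + k0) * p) = ω (r + a * p) := hB r a hbase k0
  calc x (n + k0 * p) = ω (n + k0 * p + m) := (hagree _ (hkM k0 (by omega))).symm
    _ = ω (r + (a + k0) * p) := hcol k0
    _ = ω (r + a * p) := hall
    _ = x n := hxn.symm
end
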